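/- In the agent-proposing Gale-Shapley algorithm, the output matching is stable: there is no agent-item pair (a, o), with a not matched to o, such that a strictly prefers o to a's assigned item and o strictly prefers a to o's assigned agent. -/

import Mathlib

/-- State of the agent-proposing Gale-Shapley (deferred acceptance) algorithm:
the list of agents still to propose, for each agent the set of items that have
rejected it, and for each item the agent it currently (tentatively) holds. -/
structure GSState (n : ℕ) where
  queue : List (Fin n)
  rejected : Fin n → Finset (Fin n)
  holder : Fin n → Option (Fin n)

/-- The most preferred element of `S` according to the rank function `ra`
(lower rank = more preferred). -/
def bestIn {n : ℕ} (ra : Fin n → ℕ) (S : Finset (Fin n)) : Option (Fin n) :=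
  (List.finRange n).find? fun o => decide (o ∈ S ∧ ∀ o' ∈ S, ra o ≤ ra o')

/-- One step of agent-proposing deferred acceptance: the next unmatched agent `a`
proposes to its most preferred item `o` among those that have not rejected it; the
item accepts if unmatched, or if it strictly prefers `a` to its current holder `b`
(in which case `b` is rejected and will propose again); otherwise `a` is rejected. -/
def gsStep {n : ℕ} (rA rI : Fin n → Fin n → ℕ) (s : GSState n) : GSState n :=
  match s.queue with
  | [] => s
  | a :: rest =>
      match bestIn (rA a) (Finset.univ \ s.rejected a) with
      | none => { s with queue := rest }
      | some o =>
          match s.holder o with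
          | none => { s with queue := rest,
                             holder := Function.update s.holder o (some a) }
          | some b =>
              if rI o a < rI o b then
                { queue := rest ++ [b],
                  rejected := Function.update s.rejected b (insert o (s.rejected b)),
                  holder := Function.update s.holder o (some a) }
              else
                { s with queue := rest ++ [a],
                         rejected := Function.update s.rejected a
                            (insert o (s.rejected a)) }

/-- The final state of the Gale-Shapley algorithm on agent ranks `rA` and item ranks
`rI` (enough steps are taken for the algorithm to terminate). -/
def gsRun {n : ℕ} (rA rI : Fin n → Fin n → ℕ) : GSState n :=
  (gsStep rA rI)^[n * n + n]
    { queue := List.finRange n, rejected := fun _ => ∅, holder := fun _ => none }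

lemma bestIn_some {n : ℕ} {ra : Fin n → ℕ} {S : Finset (Fin n)} {o : Fin n}
    (h : bestIn ra S = some o) : o ∈ S ∧ ∀ o' ∈ S, ra o ≤ ra o' := by
  have := List.find?_some h
  simpa using this

def GSInv {n : ℕ} (rA rI : Fin n → Fin n → ℕ) (s : GSState n) : Prop :=
  s.queue.Nodup ∧
  (∀ o a, s.holder o = some a → a ∉ s.queue) ∧
  (∀ o o' a, s.holder o = some a → s.holder o' = some a → o = o') ∧
  (∀ o a, s.holder o = some a →
     bestIn (rA a) (Finset.univ \ s.rejected a) = some o) ∧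
  (∀ a o, o ∈ s.rejected a → ∃ c, s.holder o = some c ∧ rI o c < rI o a)

lemma inv_step {n : ℕ} (rA rI : Fin n → Fin n → ℕ)
    (hI : ∀ o, Function.Injective (rI o)) (s : GSState n)
    (h : GSInv rA rI s) : GSInv rA rI (gsStep rA rI s) := by
  obtain ⟨h1, h2, h3, h4, h5⟩ := h
  rcases hq : s.queue with _ | ⟨a, rest⟩
  · have hstep : gsStep rA rI s = s := by simp [gsStep, hq]
    rw [hstep]
    exact ⟨by rw [hq]; exact List.nodup_nil, fun o a ho => by rw [hq]; simp, h3, h4, h5⟩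
  have haq : a ∈ s.queue := by simp [hq]
  have hnodup : rest.Nodup := by rw [hq] at h1; exact h1.of_cons
  have hanr : a ∉ rest := by rw [hq] at h1; exact (List.nodup_cons.mp h1).1
  have hanoth : ∀ o', s.holder o' ≠ some a := fun o' hc => (h2 o' a hc) haq
  rcases hb : bestIn (rA a) (Finset.univ \ s.rejected a) with _ | o
  · have hstep : gsStep rA rI s = { s with queue := rest } := by
      simp [gsStep, hq, hb]
    rw [hstep]
    unfold GSInv; dsimp only
    refine ⟨hnodup, fun o c hc => ?_, h3, h4, h5⟩
    intro hmem
    exact h2 o c hc (by rw [hq]; exact List.mem_cons_of_mem _ hmem)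
  rcases hh : s.holder o with _ | b
  · -- item o unmatched: a takes o
    have hstep : gsStep rA rI s =
        { s with queue := rest, holder := Function.update s.holder o (some a) } := by
      simp [gsStep, hq, hb, hh]
    rw [hstep]
    unfold GSInv; dsimp only
    refine ⟨hnodup, ?_, ?_, ?_, ?_⟩
    · intro o' c hc hmem
      by_cases hne : o' = o
      · subst hne
        rw [Function.update_self] at hc
        injection hc with h'; subst h'
        exact hanr hmem
      · rw [Function.update_of_ne hne] at hc
        exact h2 o' c hc (by rw [hq]; exact List.mem_cons_of_mem _ hmem)
    · intro o1 o2 c hc1 hc2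
      by_cases hne1 : o1 = o <;> by_cases hne2 : o2 = o
      · rw [hne1, hne2]
      · subst hne1
        rw [Function.update_self] at hc1
        rw [Function.update_of_ne hne2] at hc2
        injection hc1 with h'; subst h'
        exact absurd hc2 (hanoth o2)
      · subst hne2
        rw [Function.update_self] at hc2
        rw [Function.update_of_ne hne1] at hc1
        injection hc2 with h'; subst h'
        exact absurd hc1 (hanoth o1)
      · rw [Function.update_of_ne hne1] at hc1
        rw [Function.update_of_ne hne2] at hc2
        exact h3 o1 o2 c hc1 hc2
    · intro o' c hc
      by_cases hne : o' = o
      · subst hne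
        rw [Function.update_self] at hc
        injection hc with h'; subst h'; exact hb
      · rw [Function.update_of_ne hne] at hc
        exact h4 o' c hc
    · intro c o' ho'
      obtain ⟨d, hd1, hd2⟩ := h5 c o' ho'
      have hne : o' ≠ o := fun e => by rw [e, hh] at hd1; exact nomatch hd1
      exact ⟨d, by rw [Function.update_of_ne hne]; exact hd1, hd2⟩
  have hbnr : b ∉ rest := fun hm => h2 o b hh (by rw [hq]; exact List.mem_cons_of_mem _ hm)
  have hba : b ≠ a := fun e => hanoth o (by rw [← e]; exact hh)
  by_cases hlt : rI o a < rI o b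
  · have hstep : gsStep rA rI s =
        { queue := rest ++ [b],
          rejected := Function.update s.rejected b (insert o (s.rejected b)),
          holder := Function.update s.holder o (some a) } := by
      simp [gsStep, hq, hb, hh, hlt]
    rw [hstep]
    have hbonly : ∀ o', s.holder o' = some b → o' = o := fun o' hc => h3 o' o b hc hh
    unfold GSInv; dsimp only
    refine ⟨?_, ?_, ?_, ?_, ?_⟩
    · simp [List.nodup_append, hnodup, hbnr]; exact fun x hx e => hbnr (e ▸ hx)
    · intro o' c hc hmem
      simp only [List.mem_append, List.mem_singleton] at hmem
      by_cases hne : o' = o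
      · subst hne
        rw [Function.update_self] at hc
        injection hc with h'; subst h'
        rcases hmem with hm | rfl
        · exact hanr hm
        · exact hba rfl
      · rw [Function.update_of_ne hne] at hc
        rcases hmem with hm | rfl
        · exact h2 o' c hc (by rw [hq]; exact List.mem_cons_of_mem _ hm)
        · exact hne (hbonly o' hc)
    · intro o1 o2 c hc1 hc2
      by_cases hne1 : o1 = o <;> by_cases hne2 : o2 = o
      · rw [hne1, hne2]
      · subst hne1
        rw [Function.update_self] at hc1
        rw [Function.update_of_ne hne2] at hc2
        injection hc1 with h'; subst h'
        exact absurd hc2 (hanoth o2)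
      · subst hne2
        rw [Function.update_self] at hc2
        rw [Function.update_of_ne hne1] at hc1
        injection hc2 with h'; subst h'
        exact absurd hc1 (hanoth o1)
      · rw [Function.update_of_ne hne1] at hc1
        rw [Function.update_of_ne hne2] at hc2
        exact h3 o1 o2 c hc1 hc2
    · intro o' c hc
      by_cases hne : o' = o
      · subst hne
        rw [Function.update_self] at hc
        injection hc with h'; subst h'
        rw [Function.update_of_ne (Ne.symm hba)]
        exact hb
      · rw [Function.update_of_ne hne] at hc
        have hcb : c ≠ b := fun e => hne (hbonly o' (by rw [← e]; exact hc))
        rw [Function.update_of_ne hcb]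
        exact h4 o' c hc
    · intro c o' ho'
      by_cases hcb : c = b
      · subst hcb
        rw [Function.update_self, Finset.mem_insert] at ho'
        rcases ho' with rfl | hold
        · exact ⟨a, Function.update_self _ _ _, hlt⟩
        · obtain ⟨d, hd1, hd2⟩ := h5 c o' hold
          by_cases hne : o' = o
          · subst hne
            rw [hh] at hd1; injection hd1 with h'; subst h'
            exact ⟨a, Function.update_self _ _ _, hlt.trans hd2⟩
          · exact ⟨d, by rw [Function.update_of_ne hne]; exact hd1, hd2⟩
      · rw [Function.update_of_ne hcb] at ho'
        obtain ⟨d, hd1, hd2⟩ := h5 c o' ho'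
        by_cases hne : o' = o
        · subst hne
          rw [hh] at hd1; injection hd1 with h'; subst h'
          refine ⟨a, Function.update_self _ _ _, ?_⟩
          exact hlt.trans hd2
        · exact ⟨d, by rw [Function.update_of_ne hne]; exact hd1, hd2⟩
  · have hstep : gsStep rA rI s =
        { s with queue := rest ++ [a],
                 rejected := Function.update s.rejected a (insert o (s.rejected a)) } := by
      simp [gsStep, hq, hb, hh, hlt]
    rw [hstep]
    unfold GSInv; dsimp only
    refine ⟨?_, ?_, h3, ?_, ?_⟩
    · simp [List.nodup_append, hnodup, hanr]; exact fun x hx e => hanr (e ▸ hx)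
    · intro o' c hc hmem
      simp only [List.mem_append, List.mem_singleton] at hmem
      rcases hmem with hm | rfl
      · exact h2 o' c hc (by rw [hq]; exact List.mem_cons_of_mem _ hm)
      · exact hanoth o' hc
    · intro o' c hc
      have hca : c ≠ a := fun e => hanoth o' (by rw [← e]; exact hc)
      rw [Function.update_of_ne hca]
      exact h4 o' c hc
    · intro c o' ho'
      by_cases hca : c = a
      · subst hca
        rw [Function.update_self, Finset.mem_insert] at ho'
        rcases ho' with rfl | hold
        · refine ⟨b, hh, ?_⟩
          rcases lt_or_eq_of_le (not_lt.mp hlt) with h' | h'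
          · exact h'
          · exact absurd (hI o' h') hba
        · exact h5 c o' hold
      · rw [Function.update_of_ne hca] at ho'
        exact h5 c o' ho'

lemma inv_run {n : ℕ} (rA rI : Fin n → Fin n → ℕ)
    (hI : ∀ o, Function.Injective (rI o)) : GSInv rA rI (gsRun rA rI) := by
  unfold gsRun
  generalize n * n + n = k
  induction k with
  | zero =>
      exact ⟨List.nodup_finRange n, fun o a h => by simp at h,
        fun o o' a h => by simp at h, fun o a h => by simp at h,
        fun a o h => by simp at h⟩
  | succ k ih =>
      rw [Function.iterate_succ_apply']
      exact inv_step rA rI hI _ ih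

/-- The agent-proposing Gale-Shapley output is stable: there is no blocking pair,
i.e. no agent `a` matched to item `oa` and item `o ≠ oa` held by agent `b` such that
`a` strictly prefers `o` to `oa` and `o` strictly prefers `a` to `b`. -/
theorem galeShapley_stable {n : ℕ}
    (rA rI : Fin n → Fin n → ℕ)
    (hA : ∀ a, Function.Injective (rA a)) (hI : ∀ o, Function.Injective (rI o)) :
    ∀ a b o oa : Fin n,
      (gsRun rA rI).holder oa = some a → (gsRun rA rI).holder o = some b →
        o ≠ oa → ¬(rA a o < rA a oa ∧ rI o a < rI o b) := by
  intro a b o oa ha hbh hne ⟨hpref, hip⟩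
  obtain ⟨_, _, _, h4, h5⟩ := inv_run rA rI hI
  have hbest := bestIn_some (h4 oa a ha)
  by_cases hrej : o ∈ (gsRun rA rI).rejected a
  · obtain ⟨c, hc1, hc2⟩ := h5 a o hrej
    rw [hbh] at hc1; injection hc1 with h'; subst h'
    exact absurd hip (not_lt.mpr hc2.le)
  · have : rA a oa ≤ rA a o := hbest.2 o (by simp [hrej])
    exact absurd hpref (not_lt.mpr this)
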